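/- Let f : ℝ^d → ℝ be L-smooth, satisfy the PL condition (1/2)‖∇f(x)‖² ≥ μ(f(x) - f*) where f* = inf f > -∞, and suppose x_{t+1} = x_t - α v_t with 0 < α ≤ 1/(2L). Then f(x_{t+1}) - f* ≤ (1 - αμ/2)(f(x_t) - f*) - (α/4)‖v_t‖² + α‖v_t - ∇f(x_t)‖². -/

import Mathlib

open InnerProductSpace

lemma descent_aux {d : ℕ} (f : EuclideanSpace ℝ (Fin d) → ℝ) (L : ℝ) (hL : 0 ≤ L)
    (hdiff : Differentiable ℝ f)
    (hlip : ∀ x y, ‖gradient f x - gradient f y‖ ≤ L * ‖x - y‖)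
    (x y : EuclideanSpace ℝ (Fin d)) :
    f y ≤ f x + ⟪gradient f x, y - x⟫_ℝ + L / 2 * ‖y - x‖ ^ 2 := by
  set w := y - x with hw
  set g := gradient f x with hg
  set ψ : ℝ → ℝ := fun t => f (x + t • w) - t * ⟪g, w⟫_ℝ - L / 2 * t ^ 2 * ‖w‖ ^ 2 with hψ
  have hc : ∀ t : ℝ, HasDerivAt (fun s : ℝ => x + s • w) w t := by
    intro t
    simpa using ((hasDerivAt_id t).smul_const w).const_add x
  have hfd : ∀ t : ℝ, HasDerivAt (fun s : ℝ => f (x + s • w))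
      (⟪gradient f (x + t • w), w⟫_ℝ) t := by
    intro t
    have h1 : HasFDerivAt f (InnerProductSpace.toDual ℝ _ (gradient f (x + t • w)))
        (x + t • w) := (hdiff _).hasGradientAt
    exact (h1.comp_hasDerivAt t (hc t)).congr_deriv (by simp)
  have hψd : ∀ t : ℝ, HasDerivAt ψ
      (⟪gradient f (x + t • w), w⟫_ℝ - ⟪g, w⟫_ℝ - L * t * ‖w‖ ^ 2) t := by
    intro t
    have h2 : HasDerivAt (fun t : ℝ => t * ⟪g, w⟫_ℝ) (⟪g, w⟫_ℝ) t := by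
      simpa using (hasDerivAt_id t).mul_const (⟪g, w⟫_ℝ)
    have h3 : HasDerivAt (fun t : ℝ => L / 2 * t ^ 2 * ‖w‖ ^ 2)
        (L * t * ‖w‖ ^ 2) t := by
      have := ((hasDerivAt_pow 2 t).const_mul (L / 2)).mul_const (‖w‖ ^ 2)
      refine this.congr_deriv ?_
      rw [show (2:ℕ) - 1 = 1 from rfl]; push_cast
      ring
    exact ((hfd t).sub h2).sub h3
  have hanti : AntitoneOn ψ (Set.Icc 0 1) := by
    apply antitoneOn_of_deriv_nonpos (convex_Icc 0 1)
    · exact fun t _ => ((hψd t).differentiableAt).continuousAt.continuousWithinAt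
    · intro t ht
      exact ((hψd t).differentiableAt).differentiableWithinAt
    · intro t ht
      rw [interior_Icc] at ht
      rw [((hψd t).deriv)]
      have hcs : ⟪gradient f (x + t • w) - g, w⟫_ℝ ≤ L * t * ‖w‖ ^ 2 := by
        calc ⟪gradient f (x + t • w) - g, w⟫_ℝ ≤ ‖gradient f (x + t • w) - g‖ * ‖w‖ :=
              real_inner_le_norm _ _
          _ ≤ (L * ‖(x + t • w) - x‖) * ‖w‖ := by
              apply mul_le_mul_of_nonneg_right (hlip _ _) (norm_nonneg _)
          _ = L * (|t| * ‖w‖) * ‖w‖ := by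
              rw [add_sub_cancel_left, norm_smul, Real.norm_eq_abs]
          _ = L * t * ‖w‖ ^ 2 := by rw [abs_of_pos ht.1]; ring
      have := inner_sub_left (𝕜 := ℝ) (gradient f (x + t • w)) g w
      linarith [hcs, this.symm]
  have h01 := hanti (Set.mem_Icc.mpr ⟨le_refl 0, zero_le_one⟩)
      (Set.mem_Icc.mpr ⟨zero_le_one, le_refl 1⟩) zero_le_one
  simp only [hψ, one_smul, zero_smul, add_zero] at h01
  have hxy : x + w = y := by rw [hw]; abel
  rw [hxy] at h01
  nlinarith [h01]

set_option maxHeartbeats 1000000 in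
/-- Descent lemma under the PL condition: one-step linear contraction of the
optimality gap, up to gradient-estimation error. -/
theorem stmt_2 {d : ℕ} (f : EuclideanSpace ℝ (Fin d) → ℝ) (L μ : ℝ)
    (hL : 0 < L) (hμ : 0 < μ)
    (hdiff : Differentiable ℝ f)
    (hlip : ∀ x y, ‖gradient f x - gradient f y‖ ≤ L * ‖x - y‖)
    (hbdd : BddBelow (Set.range f))
    (fstar : ℝ) (hfstar : fstar = ⨅ x, f x)
    (hPL : ∀ x, (1 / 2) * ‖gradient f x‖ ^ 2 ≥ μ * (f x - fstar))
    (α : ℝ) (hα0 : 0 < α) (hα : α ≤ 1 / (2 * L))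
    (x v : EuclideanSpace ℝ (Fin d)) :
    f (x - α • v) - fstar ≤ (1 - α * μ / 2) * (f x - fstar)
      - α / 4 * ‖v‖ ^ 2 + α * ‖v - gradient f x‖ ^ 2 := by
  set g := gradient f x with hg
  set e := v - g with he
  have hy : x - α • v = x + (-(α • v)) := by abel
  have hdesc := descent_aux f L hL.le hdiff hlip x (x - α • v)
  have hsub : (x - α • v) - x = -(α • v) := by abel
  rw [hsub] at hdesc
  have hin : ⟪g, -(α • v)⟫_ℝ = -(α * ⟪g, v⟫_ℝ) := by
    rw [inner_neg_right, real_inner_smul_right]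
  have hn : ‖-(α • v)‖ ^ 2 = α ^ 2 * ‖v‖ ^ 2 := by
    rw [norm_neg, norm_smul, Real.norm_eq_abs, mul_pow, sq_abs]
  rw [hin, hn] at hdesc
  -- key identities
  have hv : v = g + e := by rw [he]; abel
  have hV : ‖v‖ ^ 2 = ‖g‖ ^ 2 + 2 * ⟪g, e⟫_ℝ + ‖e‖ ^ 2 := by
    rw [hv, norm_add_sq_real]
  have hgv : ⟪g, v⟫_ℝ = ‖g‖ ^ 2 + ⟪g, e⟫_ℝ := by
    rw [hv, inner_add_right, real_inner_self_eq_norm_sq]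
  have hPLx := hPL x
  rw [← hg] at hPLx
  have hgap : fstar ≤ f x := by
    rw [hfstar]; exact ciInf_le hbdd x
  have hLα : L * α ≤ 1 / 2 := by
    rw [le_div_iff₀ (by positivity : (0:ℝ) < 2*L)] at hα
    linarith
  have hVnn : (0:ℝ) ≤ ‖v‖ ^ 2 := sq_nonneg _
  rw [hgv, hV] at hdesc
  have hαsq : L / 2 * α ^ 2 * ‖v‖ ^ 2 ≤ α / 4 * ‖v‖ ^ 2 := by
    apply mul_le_mul_of_nonneg_right _ hVnn
    nlinarith
  rw [hV] at hαsq ⊢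
  have h1 : α * μ * (f x - fstar) ≤ α * ‖g‖ ^ 2 / 2 := by
    nlinarith [mul_nonneg hα0.le (by linarith : (0:ℝ) ≤ 1 / 2 * ‖g‖ ^ 2 - μ * (f x - fstar))]
  have h2 : (0:ℝ) ≤ α * ‖e‖ ^ 2 := mul_nonneg hα0.le (sq_nonneg _)
  have h4 : (0:ℝ) ≤ α * μ * (f x - fstar) :=
    mul_nonneg (mul_nonneg hα0.le hμ.le) (by linarith)
  nlinarith [hdesc, hαsq, h1, h2, h4]
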